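/- For every integer m ≥ 1, the number of distinct patterns of radius m occurring in trivalent trees, i.e. Λ(Z, m) = card{B_S(m) : S ∈ Z}, equals 4 · 3^{3(2^{m−1} − 1)}. Equivalently, exactly 4 · 3^{3(2^{m−1} − 1)} closed d_2-balls of radius e^{−m} are needed to cover Z. -/

import Mathlib

open Filter
open scoped ENNReal

noncomputable section

namespace GraphTrees

/-- The word length of an element of a free group: the length of its reduced word. -/
def wlen {n : ℕ} (g : FreeGroup (Fin n)) : ℕ := (FreeGroup.toWord g).length

/-- `h` is a prefix of `g`. -/
def IsPref {n : ℕ} (h g : FreeGroup (Fin n)) : Prop :=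
  wlen h + wlen (h⁻¹ * g) = wlen g

/-- Vertex sets of infinite connected subtrees of the Cayley graph of the free group on
`n` generators which contain the identity: subsets containing `1`, infinite, and
prefix-closed. -/
def IsTree {n : ℕ} (S : Set (FreeGroup (Fin n))) : Prop :=
  1 ∈ S ∧ S.Infinite ∧ ∀ g ∈ S, ∀ h : FreeGroup (Fin n), IsPref h g → h ∈ S

/-- The space `X n` of pointed trees. -/
def X (n : ℕ) : Type := {S : Set (FreeGroup (Fin n)) // IsTree S}

variable {n : ℕ}

/-- The pattern `B_S(m)` of radius `m` of a pointed tree. -/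
def ball (S : X n) (m : ℕ) : Set (FreeGroup (Fin n)) := {g ∈ S.1 | wlen g ≤ m}

/-- The set of radii on which two pointed trees have the same pattern. -/
def agreeSet (S S' : X n) : Set ℕ := {m | ball S m = ball S' m}

/-- The ball metric on the space of pointed trees. -/
def tdist (S S' : X n) : ℝ :=
  letI := Classical.propDecidable (S = S')
  if S = S' then 0 else Real.exp (-((sSup (agreeSet S S') : ℕ) : ℝ))

theorem tdist_eq_of_ne {x y : X n} (h : x ≠ y) :
    tdist x y = Real.exp (-((sSup (agreeSet x y) : ℕ) : ℝ)) := by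
  unfold tdist
  rw [if_neg h]

theorem ball_mono_eq {x y : X n} {k m : ℕ} (hkm : k ≤ m)
    (h : ball x m = ball y m) : ball x k = ball y k := by
  ext g
  constructor
  · rintro ⟨hg, hlen⟩
    have hx : g ∈ ball x m := ⟨hg, hlen.trans hkm⟩
    rw [h] at hx
    exact ⟨hx.1, hlen⟩
  · rintro ⟨hg, hlen⟩
    have hy : g ∈ ball y m := ⟨hg, hlen.trans hkm⟩
    rw [← h] at hy
    exact ⟨hy.1, hlen⟩

theorem eq_of_agree_all {x y : X n} (h : ∀ m, ball x m = ball y m) : x = y := by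
  apply Subtype.ext
  ext g
  constructor
  · intro hg
    have hx : g ∈ ball x (wlen g) := ⟨hg, le_rfl⟩
    rw [h] at hx
    exact hx.1
  · intro hg
    have hy : g ∈ ball y (wlen g) := ⟨hg, le_rfl⟩
    rw [← h] at hy
    exact hy.1

theorem bddAbove_agreeSet {x y : X n} (h : x ≠ y) : BddAbove (agreeSet x y) := by
  by_contra hb
  refine h (eq_of_agree_all fun m => ?_)
  rcases not_bddAbove_iff.mp hb m with ⟨k, hk, hmk⟩
  exact ball_mono_eq hmk.le hk

theorem ball_zero (x : X n) : ball x 0 = {1} := by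
  ext g
  simp only [ball, Set.mem_setOf_eq, Nat.le_zero, Set.mem_singleton_iff]
  constructor
  · rintro ⟨hg, hlen⟩
    exact FreeGroup.toWord_eq_nil_iff.mp (List.length_eq_zero_iff.mp hlen)
  · rintro rfl
    exact ⟨x.2.1, by simp [wlen]⟩

theorem zero_mem_agreeSet (x y : X n) : (0 : ℕ) ∈ agreeSet x y := by
  show ball x 0 = ball y 0
  rw [ball_zero, ball_zero]

theorem tdist_nonneg (x y : X n) : 0 ≤ tdist x y := by
  rcases eq_or_ne x y with rfl | h
  · unfold tdist
    rw [if_pos rfl]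
  · rw [tdist_eq_of_ne h]
    exact (Real.exp_pos _).le

theorem tdist_self (x : X n) : tdist x x = 0 := by
  unfold tdist
  rw [if_pos rfl]

theorem tdist_comm (x y : X n) : tdist x y = tdist y x := by
  by_cases h : x = y
  · subst h; rfl
  · have hs : agreeSet x y = agreeSet y x := by
      ext m
      exact eq_comm
    rw [tdist_eq_of_ne h, tdist_eq_of_ne (Ne.symm h), hs]

theorem tdist_ultra (x y z : X n) : tdist x z ≤ max (tdist x y) (tdist y z) := by
  rcases eq_or_ne x z with rfl | hxz
  · exact le_max_of_le_left (by rw [tdist_self]; exact tdist_nonneg x y)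
  rcases eq_or_ne x y with rfl | hxy
  · exact le_max_of_le_right le_rfl
  rcases eq_or_ne y z with rfl | hyz
  · exact le_max_of_le_left le_rfl
  have hbxy := bddAbove_agreeSet hxy
  have hbyz := bddAbove_agreeSet hyz
  have hbxz := bddAbove_agreeSet hxz
  have hma : sSup (agreeSet x y) ∈ agreeSet x y :=
    Nat.sSup_mem ⟨0, zero_mem_agreeSet x y⟩ hbxy
  have hmb : sSup (agreeSet y z) ∈ agreeSet y z :=
    Nat.sSup_mem ⟨0, zero_mem_agreeSet y z⟩ hbyz
  have hmin : min (sSup (agreeSet x y)) (sSup (agreeSet y z)) ∈ agreeSet x z := by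
    have h1 : ball x (min (sSup (agreeSet x y)) (sSup (agreeSet y z)))
        = ball y (min (sSup (agreeSet x y)) (sSup (agreeSet y z))) :=
      ball_mono_eq (min_le_left _ _) hma
    have h2 : ball y (min (sSup (agreeSet x y)) (sSup (agreeSet y z)))
        = ball z (min (sSup (agreeSet x y)) (sSup (agreeSet y z))) :=
      ball_mono_eq (min_le_right _ _) hmb
    exact h1.trans h2
  have hle : min (sSup (agreeSet x y)) (sSup (agreeSet y z)) ≤ sSup (agreeSet x z) :=
    le_csSup hbxz hmin
  rw [tdist_eq_of_ne hxz, tdist_eq_of_ne hxy, tdist_eq_of_ne hyz]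
  rcases le_total (sSup (agreeSet x y)) (sSup (agreeSet y z)) with hab | hab
  · refine le_max_of_le_left (Real.exp_le_exp.mpr ?_)
    have h2 : ((sSup (agreeSet x y) : ℕ) : ℝ) ≤ ((sSup (agreeSet x z) : ℕ) : ℝ) := by
      exact_mod_cast (min_eq_left hab) ▸ hle
    linarith
  · refine le_max_of_le_right (Real.exp_le_exp.mpr ?_)
    have h2 : ((sSup (agreeSet y z) : ℕ) : ℝ) ≤ ((sSup (agreeSet x z) : ℕ) : ℝ) := by
      exact_mod_cast (min_eq_right hab) ▸ hle
    linarith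

theorem tdist_triangle (x y z : X n) : tdist x z ≤ tdist x y + tdist y z :=
  (tdist_ultra x y z).trans
    (max_le (le_add_of_nonneg_right (tdist_nonneg y z))
      (le_add_of_nonneg_left (tdist_nonneg x y)))

instance : MetricSpace (X n) where
  dist := tdist
  dist_self := tdist_self
  dist_comm := tdist_comm
  dist_triangle := tdist_triangle
  eq_of_dist_eq_zero := by
    intro x y h
    by_contra hne
    have h' : tdist x y = 0 := h
    rw [tdist_eq_of_ne hne] at h'
    exact (Real.exp_pos _).ne' h'

theorem dist_eq_tdist (x y : X n) : dist x y = tdist x y := rfl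

/-- The translate `S · g` of a tree `S` by a vertex `g ∈ S`. -/
def translate {n : ℕ} (S : Set (FreeGroup (Fin n))) (g : FreeGroup (Fin n)) :
    Set (FreeGroup (Fin n)) := (fun h => g⁻¹ * h) '' S

/-- The orbit `O(S) = {S · g : g ∈ S}` of a pointed tree under the pseudogroup action. -/
def orbit (S : X n) : Set (X n) := {S' | ∃ g ∈ S.1, S'.1 = translate S.1 g}

/-- A subset `Y ⊆ X n` is invariant under the pseudogroup action. -/
def Invariant (Y : Set (X n)) : Prop :=
  ∀ S ∈ Y, ∀ g ∈ S.1, ∀ S' : X n, S'.1 = translate S.1 g → S' ∈ Y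

/-- `Λ(Z, m)`: the number of distinct patterns of radius `m` of trees in `Z`. -/
def Lam (Z : Set (X n)) (m : ℕ) : ℕ := ((fun S => ball S m) '' Z).ncard

/-- The lower box dimension of a subset of the space of pointed trees. -/
def lowerBox (Z : Set (X n)) : ℝ≥0∞ :=
  Filter.liminf (fun m : ℕ => ENNReal.ofReal (Real.log (Lam Z m)) / (m : ℝ≥0∞)) Filter.atTop

/-- The upper box dimension of a subset of the space of pointed trees. -/
def upperBox (Z : Set (X n)) : ℝ≥0∞ :=
  Filter.limsup (fun m : ℕ => ENNReal.ofReal (Real.log (Lam Z m)) / (m : ℝ≥0∞)) Filter.atTop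


/-- The set of trivalent trees in `X 2`: every vertex has exactly three neighbours. -/
def Ztri : Set (X 2) :=
  {S | ∀ g ∈ S.1, ({h ∈ S.1 | wlen (g⁻¹ * h) = 1} : Set (FreeGroup (Fin 2))).encard = 3}


/-! ### Auxiliary: words and reduced words -/


abbrev A := Fin 2 × Bool
abbrev W := List A

/-- the inverse letter -/
def bar (x : A) : A := (x.1, !x.2)

lemma bar_bar (x : A) : bar (bar x) = x := by simp [bar]

lemma bar_ne (x : A) : bar x ≠ x := by simp [bar, Prod.ext_iff]

/-- no-cancellation relation between consecutive letters -/
def RelR (a b : A) : Prop := ¬ (a.1 = b.1 ∧ a.2 = !b.2)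

lemma relR_iff (a b : A) : RelR b a ↔ b ≠ bar a := by
  constructor
  · rintro h rfl; exact h ⟨rfl, by simp [bar]⟩
  · rintro h ⟨h1, h2⟩; exact h (Prod.ext h1 (by simp [bar, h2]))

/-- A word is reduced. -/
def Rd (w : W) : Prop := List.Chain' RelR w

lemma rd_nil : Rd [] := List.isChain_nil

lemma rd_singleton (x : A) : Rd [x] := List.isChain_singleton x

lemma reduce_eq_self_iff (w : W) : FreeGroup.reduce w = w ↔ Rd w := by
  induction w with
  | nil => simp [Rd, List.Chain']
  | cons x t ih =>
    constructor
    · intro h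
      rw [FreeGroup.reduce.cons] at h
      rcases ht : FreeGroup.reduce t with _ | ⟨hd, tl⟩ <;> rw [ht] at h <;> simp only at h
      · have h2 : t = [] := (List.cons.injEq _ _ _ _).mp h |>.2.symm
        subst h2; exact rd_singleton x
      · by_cases hc : x.1 = hd.1 ∧ x.2 = !hd.2
        · rw [if_pos hc] at h
          exfalso
          have hlen := FreeGroup.Red.length_le (FreeGroup.reduce.red (L := t))
          have h3 := congrArg List.length h
          rw [ht] at hlen
          simp at h3 hlen
          omega
        · rw [if_neg hc] at h
          have h2 : t = hd :: tl := ((List.cons.injEq _ _ _ _).mp h).2.symm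
          rw [← h2] at ht
          have h3 := ih.mp ht
          rw [h2] at h3 ⊢
          exact List.isChain_cons_cons.mpr ⟨hc, h3⟩
    · intro h
      rcases t with _ | ⟨hd, tl⟩
      · rfl
      · have hc := (List.isChain_cons_cons.mp h).1
        have ht := (List.isChain_cons_cons.mp h).2
        have h4 := ih.mpr ht
        rw [FreeGroup.reduce.cons, h4]
        simp only
        rw [if_neg hc]

lemma rd_toWord (g : FreeGroup (Fin 2)) : Rd g.toWord :=
  (reduce_eq_self_iff _).mp (FreeGroup.reduce_toWord g)

lemma toWord_mk_rd {w : W} (h : Rd w) : (FreeGroup.mk w).toWord = w := by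
  rw [FreeGroup.toWord_mk, (reduce_eq_self_iff w).mpr h]

lemma rd_append_left {u v : W} (h : Rd (u ++ v)) : Rd u :=
  (List.isChain_append.mp h).1

lemma rd_append_right {u v : W} (h : Rd (u ++ v)) : Rd v :=
  (List.isChain_append.mp h).2.1

lemma red_eq_of_length {L₁ L₂ : W} (h : FreeGroup.Red L₁ L₂)
    (hl : L₁.length = L₂.length) : L₁ = L₂ :=
  (FreeGroup.Red.sublist h).eq_of_length hl.symm |>.symm


abbrev F := FreeGroup (Fin 2)


lemma wlen_inv (g : F) : wlen g⁻¹ = wlen g := by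
  unfold wlen
  rw [FreeGroup.toWord_inv, FreeGroup.invRev_length]

/-- if u ++ v is the reduced word of g, then mk u is a prefix complement decomposition -/
lemma mk_append (u v : W) : FreeGroup.mk (u ++ v) = FreeGroup.mk u * FreeGroup.mk v :=
  (FreeGroup.mul_mk).symm

lemma inv_mul_eq_of_append {h g : F} {v : W} (hv : g.toWord = h.toWord ++ v) :
    h⁻¹ * g = FreeGroup.mk v := by
  have h1 : g = h * FreeGroup.mk v := by
    conv_lhs => rw [← FreeGroup.mk_toWord (x := g)]
    rw [hv, mk_append, FreeGroup.mk_toWord]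
  rw [h1]; group

lemma prefix_iff (h g : F) : IsPref h g ↔ h.toWord <+: g.toWord := by
  constructor
  · intro H
    have hg : g = FreeGroup.mk (h.toWord ++ (h⁻¹ * g).toWord) := by
      rw [mk_append, FreeGroup.mk_toWord, FreeGroup.mk_toWord]
      group
    have h2 : g.toWord = FreeGroup.reduce (h.toWord ++ (h⁻¹ * g).toWord) := by
      conv_lhs => rw [hg]
      rw [FreeGroup.toWord_mk]
    have h3 : FreeGroup.Red (h.toWord ++ (h⁻¹ * g).toWord) g.toWord := by
      rw [h2]; exact FreeGroup.reduce.red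
    have h4 := red_eq_of_length h3 (by
      have := H
      unfold IsPref wlen at this
      simp only [List.length_append]
      omega)
    exact ⟨(h⁻¹ * g).toWord, h4⟩
  · rintro ⟨v, hv⟩
    have hv' : g.toWord = h.toWord ++ v := hv.symm
    have h1 : h⁻¹ * g = FreeGroup.mk v := inv_mul_eq_of_append hv'
    have h2 : Rd v := rd_append_right (hv' ▸ rd_toWord g)
    unfold IsPref wlen
    rw [h1, toWord_mk_rd h2, hv', List.length_append]

lemma wlen_one_iff (k : F) : wlen k = 1 ↔ ∃ x : A, k = FreeGroup.mk [x] := by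
  constructor
  · intro hk
    rcases List.length_eq_one_iff.mp hk with ⟨x, hx⟩
    exact ⟨x, by rw [← FreeGroup.mk_toWord (x := k), hx]⟩
  · rintro ⟨x, rfl⟩
    unfold wlen
    rw [toWord_mk_rd (rd_singleton x)]
    rfl

lemma neighbor_iff (g h : F) : wlen (g⁻¹ * h) = 1 ↔
    ∃ x : A, h.toWord = g.toWord ++ [x] ∨ g.toWord = h.toWord ++ [x] := by
  constructor
  · intro H
    rcases (wlen_one_iff _).mp H with ⟨x, hx⟩
    have hh : h = g * FreeGroup.mk [x] := by
      rw [← hx]; group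
    rcases List.eq_nil_or_concat g.toWord with hu | ⟨u', y, hu⟩
    on_goal 2 => rw [List.concat_eq_append] at hu
    · refine ⟨x, Or.inl ?_⟩
      have hg1 : g = 1 := FreeGroup.toWord_eq_nil_iff.mp hu
      rw [hh, hg1, one_mul, toWord_mk_rd (rd_singleton x)]
      simp
    · by_cases hc : y = bar x
      · refine ⟨y, Or.inr ?_⟩
        have hgm : g = FreeGroup.mk (u' ++ [y]) := by
          rw [← hu, FreeGroup.mk_toWord]
        have hstep : FreeGroup.Red.Step (u' ++ [y] ++ [x]) (u' ++ []) := by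
          have : u' ++ [y] ++ [x] = u' ++ (x.1, !x.2) :: (x.1, x.2) :: [] := by
            simp [hc, bar]
          rw [this]
          exact FreeGroup.Red.Step.not_rev
        have hmk : FreeGroup.mk (u' ++ [y] ++ [x]) = FreeGroup.mk (u' ++ []) := by
          rw [← FreeGroup.quot_mk_eq_mk, ← FreeGroup.quot_mk_eq_mk]
          exact Quot.sound hstep
        have hh2 : h = FreeGroup.mk u' := by
          rw [hh, hgm, ← mk_append, hmk, List.append_nil]
        have hru' : Rd u' := rd_append_left (hu ▸ rd_toWord g)
        rw [hh2, toWord_mk_rd hru', hu]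
      · refine ⟨x, Or.inl ?_⟩
        have hrd : Rd (g.toWord ++ [x]) := by
          rw [Rd, List.Chain', List.isChain_append]
          refine ⟨rd_toWord g, List.isChain_singleton x, ?_⟩
          intro a ha b hb
          rw [hu] at ha
          rw [List.getLast?_concat] at ha
          simp at ha hb
          subst ha; subst hb
          exact (relR_iff x y).mpr hc
        have : h = FreeGroup.mk (g.toWord ++ [x]) := by
          rw [mk_append, FreeGroup.mk_toWord, ← hh]
        rw [this, toWord_mk_rd hrd]
  · rintro ⟨x, hx | hx⟩
    · have h1 : g⁻¹ * h = FreeGroup.mk [x] := inv_mul_eq_of_append hx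
      exact (wlen_one_iff _).mpr ⟨x, h1⟩
    · have h1 : h⁻¹ * g = FreeGroup.mk [x] := inv_mul_eq_of_append hx
      have h2 : wlen (h⁻¹ * g) = 1 := (wlen_one_iff _).mpr ⟨x, h1⟩
      rw [← wlen_inv, mul_inv_rev, inv_inv]
      exact h2



/-! ### Word patterns -/

/-- children letters of a word in a word-set -/
def chl (L : Set W) (w : W) : Set A := {x | w ++ [x] ∈ L}

/-- The set of word-level patterns of radius `m`. -/
def WP (m : ℕ) : Set (Set W) :=
  {L | [] ∈ L ∧ (∀ w ∈ L, Rd w ∧ w.length ≤ m) ∧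
    (∀ w ∈ L, ∀ u, u <+: w → u ∈ L) ∧
    ∀ w ∈ L, w.length < m → (chl L w).encard = if w = [] then 3 else 2}

/-- children letters of a vertex of a subset of the free group -/
def kids (T : Set F) (g : F) : Set A :=
  {x | Rd (g.toWord ++ [x]) ∧ FreeGroup.mk (g.toWord ++ [x]) ∈ T}

lemma nbhd_split (T : Set F) (g : F) :
    {h ∈ T | wlen (g⁻¹ * h) = 1} =
      ((fun x => FreeGroup.mk (g.toWord ++ [x])) '' kids T g) ∪
        {h ∈ T | ∃ x, g.toWord = h.toWord ++ [x]} := by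
  ext h
  simp only [Set.mem_setOf_eq, Set.mem_union, Set.mem_image, kids]
  constructor
  · rintro ⟨hT, hn⟩
    rcases (neighbor_iff g h).mp hn with ⟨x, hx | hx⟩
    · refine Or.inl ⟨x, ⟨hx ▸ rd_toWord h, ?_⟩, ?_⟩ <;>
        rw [← hx, FreeGroup.mk_toWord] <;> assumption
    · exact Or.inr ⟨hT, x, hx⟩
  · rintro (⟨x, ⟨hrd, hT⟩, rfl⟩ | ⟨hT, x, hx⟩)
    · refine ⟨hT, (neighbor_iff _ _).mpr ⟨x, Or.inl ?_⟩⟩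
      exact toWord_mk_rd hrd
    · exact ⟨hT, (neighbor_iff _ _).mpr ⟨x, Or.inr hx⟩⟩

lemma kids_injOn (T : Set F) (g : F) :
    Set.InjOn (fun x => FreeGroup.mk (g.toWord ++ [x])) (kids T g) := by
  intro x hx y hy hxy
  have h1 : g.toWord ++ [x] = g.toWord ++ [y] := by
    have := congrArg FreeGroup.toWord hxy
    rwa [toWord_mk_rd hx.1, toWord_mk_rd hy.1] at this
  simpa using h1

lemma parent_eq (T : Set F) {g : F} {w' : W} {y : A} (hw : g.toWord = w' ++ [y])
    (hp : FreeGroup.mk w' ∈ T) :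
    {h ∈ T | ∃ x, g.toWord = h.toWord ++ [x]} = {FreeGroup.mk w'} := by
  have hrd : Rd w' := rd_append_left (hw ▸ rd_toWord g)
  ext h
  simp only [Set.mem_setOf_eq, Set.mem_singleton_iff]
  constructor
  · rintro ⟨hT, x, hx⟩
    rw [hw] at hx
    have := (List.append_inj' hx.symm rfl).1
    rw [← this, FreeGroup.mk_toWord]
  · rintro rfl
    exact ⟨hp, y, by rw [hw, toWord_mk_rd hrd]⟩

lemma parent_empty (T : Set F) {g : F} (hw : g.toWord = []) :
    {h ∈ T | ∃ x, g.toWord = h.toWord ++ [x]} = ∅ := by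
  ext h
  simp only [Set.mem_setOf_eq, Set.mem_empty_iff_false, iff_false, not_and]
  rintro _ ⟨x, hx⟩
  rw [hw] at hx
  exact absurd (congrArg List.length hx) (by simp)

lemma nbhd_encard_one (T : Set F) {g : F} (hw : g.toWord = []) :
    {h ∈ T | wlen (g⁻¹ * h) = 1}.encard = (kids T g).encard := by
  rw [nbhd_split, parent_empty T hw, Set.union_empty,
    Set.InjOn.encard_image (kids_injOn T g)]

lemma nbhd_encard_ne (T : Set F) {g : F} {w' : W} {y : A} (hw : g.toWord = w' ++ [y])
    (hp : FreeGroup.mk w' ∈ T) :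
    {h ∈ T | wlen (g⁻¹ * h) = 1}.encard = (kids T g).encard + 1 := by
  rw [nbhd_split, parent_eq T hw hp]
  have hdisj : Disjoint ((fun x => FreeGroup.mk (g.toWord ++ [x])) '' kids T g)
      {FreeGroup.mk w'} := by
    rw [Set.disjoint_singleton_right]
    rintro ⟨x, hx, hmk⟩
    have h1 := congrArg wlen hmk
    have hrd : Rd w' := rd_append_left (hw ▸ rd_toWord g)
    unfold wlen at h1
    rw [toWord_mk_rd hx.1, toWord_mk_rd hrd] at h1
    rw [hw] at h1
    simp at h1
  rw [Set.encard_union_eq hdisj, Set.InjOn.encard_image (kids_injOn T g),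
    Set.encard_singleton]

lemma mem_image_ball_iff {S : X 2} {m : ℕ} {w : W} :
    w ∈ FreeGroup.toWord '' (ball S m) ↔ Rd w ∧ w.length ≤ m ∧ FreeGroup.mk w ∈ S.1 := by
  constructor
  · rintro ⟨g, ⟨hg, hlen⟩, rfl⟩
    exact ⟨rd_toWord g, hlen, by rwa [FreeGroup.mk_toWord]⟩
  · rintro ⟨hrd, hlen, hmem⟩
    exact ⟨FreeGroup.mk w, ⟨hmem, by rwa [wlen, toWord_mk_rd hrd]⟩, toWord_mk_rd hrd⟩

lemma chl_ball_eq_kids {S : X 2} {m : ℕ} {w : W} (hrd : Rd w) (hlen : w.length < m) :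
    chl (FreeGroup.toWord '' (ball S m)) w = kids S.1 (FreeGroup.mk w) := by
  ext x
  simp only [chl, Set.mem_setOf_eq, kids, toWord_mk_rd hrd, mem_image_ball_iff]
  constructor
  · rintro ⟨h1, _, h3⟩; exact ⟨h1, h3⟩
  · rintro ⟨h1, h2⟩
    exact ⟨h1, by simpa using hlen, h2⟩

lemma encard_add_one_eq_three {a : ℕ∞} (h : a + 1 = 3) : a = 2 := by
  have h3 : (3 : ℕ∞) = 2 + 1 := by decide
  rw [h3] at h
  exact WithTop.add_right_cancel (by exact WithTop.one_ne_top) h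

lemma ball_mem_WP {S : X 2} (hS : S ∈ Ztri) (m : ℕ) :
    FreeGroup.toWord '' (ball S m) ∈ WP m := by
  refine ⟨?_, ?_, ?_, ?_⟩
  · exact mem_image_ball_iff.mpr ⟨rd_nil, by simp, by rw [← FreeGroup.one_eq_mk]; exact S.2.1⟩
  · intro w hw
    rcases mem_image_ball_iff.mp hw with ⟨h1, h2, _⟩
    exact ⟨h1, h2⟩
  · intro w hw u hu
    rcases mem_image_ball_iff.mp hw with ⟨h1, h2, h3⟩
    rcases hu with ⟨v, rfl⟩
    have hrdu : Rd u := rd_append_left h1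
    refine mem_image_ball_iff.mpr ⟨hrdu, le_trans (by simp) h2, ?_⟩
    have hpref : IsPref (FreeGroup.mk u) (FreeGroup.mk (u ++ v)) := by
      rw [prefix_iff, toWord_mk_rd hrdu, toWord_mk_rd h1]
      exact ⟨v, rfl⟩
    exact S.2.2.2 _ h3 _ hpref
  · intro w hw hlen
    rcases mem_image_ball_iff.mp hw with ⟨hrd, _, hmem⟩
    rw [chl_ball_eq_kids hrd hlen]
    have htri := hS (FreeGroup.mk w) hmem
    rcases List.eq_nil_or_concat w with rfl | ⟨w', y, rfl⟩
    · rw [if_pos rfl]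
      rw [← nbhd_encard_one S.1 (g := FreeGroup.mk ([] : W)) (toWord_mk_rd rd_nil)]
      exact htri
    · rw [List.concat_eq_append] at hrd hmem htri
      rw [List.concat_eq_append]
      rw [if_neg (by simp)]
      have hrdw : Rd w' := rd_append_left hrd
      have hp : FreeGroup.mk w' ∈ S.1 := by
        refine S.2.2.2 _ hmem _ ?_
        rw [prefix_iff, toWord_mk_rd hrdw, toWord_mk_rd hrd]
        exact ⟨[y], by simp⟩
      have := nbhd_encard_ne S.1 (g := FreeGroup.mk (w' ++ [y]))
        (toWord_mk_rd hrd) hp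
      rw [this] at htri
      exact encard_add_one_eq_three htri

/-! ### Realization of word patterns by trivalent trees -/

/-- a letter distinct from `y` and `bar y` -/
def ext1 (y : A) : A := ((if y.1 = 0 then 1 else 0 : Fin 2), true)

lemma ext1_spec : ∀ y : A, ext1 y ≠ y ∧ ext1 y ≠ bar y := by decide

lemma two_letters : ∀ y x : A, (x ≠ y ∧ x ≠ bar y) ↔ (x = ext1 y ∨ x = bar (ext1 y)) := by decide

/-- The canonical extension of a word pattern to an infinite word tree. -/
def Lfull (m : ℕ) (L : Set W) : Set W :=
  {w | Rd w ∧ w.take m ∈ L ∧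
    ∀ (u : W) (x y : A), (u ++ [x, y]) <+: w → m ≤ u.length + 1 → y ≠ x}

variable {m : ℕ} {L : Set W}

lemma mem_Lfull_of_le (hL : L ∈ WP m) {w : W} (hw : w ∈ L) : w ∈ Lfull m L := by
  obtain ⟨hrd, hlen⟩ := hL.2.1 w hw
  refine ⟨hrd, by rwa [List.take_of_length_le hlen], ?_⟩
  intro u x y hpre hm'
  exfalso
  have := hpre.length_le
  simp at this
  omega

lemma Lfull_inter (hL : L ∈ WP m) {w : W} (hw : w ∈ Lfull m L) (hlen : w.length ≤ m) :
    w ∈ L := by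
  have := hw.2.1
  rwa [List.take_of_length_le hlen] at this

lemma Lfull_pref (hL : L ∈ WP m) {w u : W} (hw : w ∈ Lfull m L) (hu : u <+: w) :
    u ∈ Lfull m L := by
  refine ⟨hw.1.prefix hu, ?_, fun v x y hpre hm' => hw.2.2 v x y (hpre.trans hu) hm'⟩
  have h1 : u.take m <+: w.take m :=
    List.prefix_take_iff.mpr ⟨(u.take_prefix m).trans hu, by simp⟩
  exact hL.2.2.1 _ hw.2.1 _ h1

lemma Lfull_extend (hL : L ∈ WP m) {w' : W} {y x : A} (hw : w' ++ [y] ∈ Lfull m L)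
    (hlen : m ≤ (w' ++ [y]).length) (hxy : x ≠ y) (hxb : x ≠ bar y) :
    (w' ++ [y]) ++ [x] ∈ Lfull m L := by
  refine ⟨?_, ?_, ?_⟩
  · rw [Rd, List.Chain', List.isChain_append]
    refine ⟨hw.1, List.isChain_singleton x, ?_⟩
    intro a ha b hb
    rw [List.getLast?_concat] at ha
    simp at ha hb
    subst ha; subst hb
    rw [relR_iff]
    intro h
    exact hxb (by rw [h, bar_bar])
  · rw [List.take_append_of_le_length hlen]
    exact hw.2.1
  · intro u a b hpre hm'
    rcases Nat.lt_or_ge (u ++ [a, b]).length ((w' ++ [y]) ++ [x]).length with hlt | hge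
    · have h2 : (u ++ [a, b]) <+: (w' ++ [y]) := by
        refine List.prefix_of_prefix_length_le hpre (List.prefix_append _ _) ?_
        simp at hlt ⊢
        omega
      exact hw.2.2 u a b h2 hm'
    · have heq : u ++ [a, b] = (w' ++ [y]) ++ [x] :=
        hpre.eq_of_length (le_antisymm hpre.length_le hge)
      have h3 : u ++ [a, b] = w' ++ [y, x] := by rw [heq]; simp
      have hlu : u.length = w'.length := by
        have := congrArg List.length h3
        simp at this
        omega
      obtain ⟨h4, h5⟩ := List.append_inj h3 hlu
      have h6 : a = y ∧ b = x := by
        have := (List.cons.injEq _ _ _ _).mp h5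
        exact ⟨this.1, ((List.cons.injEq _ _ _ _).mp this.2).1⟩
      rw [h6.1, h6.2]
      exact hxy

lemma Lfull_ext (hL : L ∈ WP m) (hm : 1 ≤ m) {w : W} (hw : w ∈ Lfull m L) :
    ∃ x, w ++ [x] ∈ Lfull m L := by
  rcases Nat.lt_or_ge w.length m with hlt | hge
  · have hwL := Lfull_inter hL hw hlt.le
    have hcard := hL.2.2.2 w hwL hlt
    have hne : (chl L w).Nonempty := by
      rw [← Set.encard_ne_zero, hcard]
      split <;> decide
    obtain ⟨x, hx⟩ := hne
    exact ⟨x, mem_Lfull_of_le hL hx⟩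
  · rcases List.eq_nil_or_concat w with rfl | ⟨w', y, rfl⟩
    · simp at hge; omega
    · rw [List.concat_eq_append] at hw ⊢
      refine ⟨ext1 y, Lfull_extend hL hw (by simpa using hge) (ext1_spec y).1 (ext1_spec y).2⟩

lemma Lfull_infinite (hL : L ∈ WP m) (hm : 1 ≤ m) : (Lfull m L).Infinite := by
  have hlen : ∀ k : ℕ, ∃ w ∈ Lfull m L, w.length = k := by
    intro k
    induction k with
    | zero => exact ⟨[], mem_Lfull_of_le hL hL.1, rfl⟩
    | succ k ih =>
      obtain ⟨w, hw, hwl⟩ := ih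
      obtain ⟨x, hx⟩ := Lfull_ext hL hm hw
      exact ⟨w ++ [x], hx, by simp [hwl]⟩
  have h1 : (Set.univ : Set ℕ) ⊆ List.length '' Lfull m L := by
    intro k _
    obtain ⟨w, hw, hwl⟩ := hlen k
    exact ⟨w, hw, hwl⟩
  have h2 : (List.length '' Lfull m L).Infinite := Set.infinite_univ.mono h1
  exact Set.Infinite.of_image _ h2

/-- The realization of a word pattern as a subset of the free group. -/
def real (m : ℕ) (L : Set W) : Set F := {g | g.toWord ∈ Lfull m L}

lemma real_isTree (hL : L ∈ WP m) (hm : 1 ≤ m) : IsTree (real m L) := by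
  refine ⟨?_, ?_, ?_⟩
  · show (1 : F).toWord ∈ Lfull m L
    rw [FreeGroup.toWord_one]
    exact mem_Lfull_of_le hL hL.1
  · have h1 : FreeGroup.mk '' Lfull m L ⊆ real m L := by
      rintro g ⟨w, hw, rfl⟩
      show (FreeGroup.mk w).toWord ∈ Lfull m L
      rwa [toWord_mk_rd hw.1]
    have h2 : Set.InjOn FreeGroup.mk (Lfull m L) := by
      intro u hu v hv huv
      rw [← toWord_mk_rd hu.1, ← toWord_mk_rd hv.1, huv]
    exact ((Lfull_infinite hL hm).image h2).mono h1
  · intro g hg h hpref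
    have := (prefix_iff h g).mp hpref
    exact Lfull_pref hL hg this

lemma kids_real (hL : L ∈ WP m) {g : F} :
    kids (real m L) g = {x | g.toWord ++ [x] ∈ Lfull m L} := by
  ext x
  simp only [kids, real, Set.mem_setOf_eq]
  constructor
  · rintro ⟨hrd, hmem⟩
    rwa [toWord_mk_rd hrd] at hmem
  · intro hmem
    exact ⟨hmem.1, by rwa [toWord_mk_rd hmem.1]⟩

lemma chl_Lfull_lt (hL : L ∈ WP m) {w : W} (hw : w ∈ Lfull m L) (hlt : w.length < m) :
    {x | w ++ [x] ∈ Lfull m L} = chl L w := by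
  ext x
  simp only [Set.mem_setOf_eq, chl]
  constructor
  · intro h
    exact Lfull_inter hL h (by simpa using hlt)
  · intro h
    exact mem_Lfull_of_le hL h

lemma chl_Lfull_ge (hL : L ∈ WP m) {w' : W} {y : A} (hw : w' ++ [y] ∈ Lfull m L)
    (hge : m ≤ (w' ++ [y]).length) :
    {x | (w' ++ [y]) ++ [x] ∈ Lfull m L} = {ext1 y, bar (ext1 y)} := by
  ext x
  simp only [Set.mem_setOf_eq, Set.mem_insert_iff, Set.mem_singleton_iff]
  rw [← two_letters]
  constructor
  · intro h
    constructor
    · have := h.2.2 w' y x (by simp) (by simp at hge ⊢; omega)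
      exact this
    · have hrd := h.1
      rw [Rd, List.Chain', List.isChain_append] at hrd
      have := hrd.2.2 y (by simp [List.getLast?_concat]) x (by simp)
      rw [relR_iff] at this
      intro hxb
      rw [hxb, bar_bar] at this
      exact this rfl
  · rintro ⟨h1, h2⟩
    exact Lfull_extend hL hw hge h1 h2

lemma real_trivalent (hL : L ∈ WP m) (hm : 1 ≤ m) {g : F} (hg : g ∈ real m L) :
    {h ∈ real m L | wlen (g⁻¹ * h) = 1}.encard = 3 := by
  have hgw : g.toWord ∈ Lfull m L := hg
  rcases List.eq_nil_or_concat g.toWord with hnil | ⟨w', y, hww⟩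
  · rw [nbhd_encard_one _ hnil, kids_real hL]
    rw [hnil] at hgw ⊢
    rw [chl_Lfull_lt hL hgw (by simp; omega)]
    have h0 : ([] : W) ∈ L := hL.1
    have := hL.2.2.2 [] h0 (by simp; omega)
    rw [if_pos rfl] at this
    exact this
  · rw [List.concat_eq_append] at hww
    have hw' : w' ∈ Lfull m L := Lfull_pref hL (hww ▸ hgw) ⟨[y], rfl⟩
    have hpar : FreeGroup.mk w' ∈ real m L := by
      show (FreeGroup.mk w').toWord ∈ Lfull m L
      rwa [toWord_mk_rd hw'.1]
    rw [nbhd_encard_ne _ hww hpar, kids_real hL]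
    have hkval : ({x | g.toWord ++ [x] ∈ Lfull m L}).encard = 2 := by
      rcases Nat.lt_or_ge g.toWord.length m with hlt | hge
      · rw [chl_Lfull_lt hL hgw hlt]
        have hwL : g.toWord ∈ L := Lfull_inter hL hgw hlt.le
        have := hL.2.2.2 _ hwL hlt
        rwa [if_neg (by rw [hww]; simp)] at this
      · rw [hww] at hgw hge ⊢
        rw [chl_Lfull_ge hL hgw hge]
        exact Set.encard_pair (Ne.symm (bar_ne (ext1 y)))
    rw [hkval]
    decide

lemma WP_realized (hm : 1 ≤ m) (hL : L ∈ WP m) :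
    ∃ S : X 2, S ∈ Ztri ∧ FreeGroup.toWord '' ball S m = L := by
  refine ⟨⟨real m L, real_isTree hL hm⟩, fun g hg => real_trivalent hL hm hg, ?_⟩
  ext w
  refine (mem_image_ball_iff (S := ⟨real m L, real_isTree hL hm⟩)).trans ?_
  constructor
  · rintro ⟨hrd, hlen, hmem⟩
    have : (FreeGroup.mk w).toWord ∈ Lfull m L := hmem
    rw [toWord_mk_rd hrd] at this
    exact Lfull_inter hL this hlen
  · intro hw
    obtain ⟨hrd, hlen⟩ := hL.2.1 w hw
    refine ⟨hrd, hlen, ?_⟩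
    show (FreeGroup.mk w).toWord ∈ Lfull m L
    rw [toWord_mk_rd hrd]
    exact mem_Lfull_of_le hL hw

/-- The collection of radius-`m` patterns of trivalent trees is exactly `WP m`. -/
lemma image_balls_eq (m : ℕ) (hm : 1 ≤ m) :
    (Set.image FreeGroup.toWord) '' ((fun S => ball S m) '' Ztri) = WP m := by
  ext L
  constructor
  · rintro ⟨B, ⟨S, hS, rfl⟩, rfl⟩
    exact ball_mem_WP hS m
  · intro hL
    obtain ⟨S, hS, hball⟩ := WP_realized hm hL
    exact ⟨ball S m, ⟨S, hS, rfl⟩, hball⟩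

/-! ### Counting word patterns: finiteness and level sizes -/

lemma ncard_of_encard {α : Type*} {s : Set α} {n : ℕ} (h : s.encard = n) : s.ncard = n := by
  rw [Set.ncard_def, h, ENat.toNat_coe]

lemma WP_elt_finite {m : ℕ} {L : Set W} (hL : L ∈ WP m) : L.Finite :=
  (List.finite_length_le A m).subset fun w hw => (hL.2.1 w hw).2

lemma WP_finite (m : ℕ) : (WP m).Finite := by
  refine ((List.finite_length_le A m).finite_subsets).subset ?_
  intro L hL
  exact fun w hw => (hL.2.1 w hw).2

lemma level_zero {m : ℕ} {L : Set W} (hL : L ∈ WP m) :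
    {w ∈ L | w.length = 0} = {([] : W)} := by
  ext w
  simp only [Set.mem_setOf_eq, Set.mem_singleton_iff, List.length_eq_zero_iff]
  exact ⟨fun h => h.2, fun h => ⟨h ▸ hL.1, h⟩⟩

lemma chl_ncard {m : ℕ} {L : Set W} (hL : L ∈ WP m) {w : W} (hw : w ∈ L)
    (hlt : w.length < m) : (chl L w).ncard = if w = [] then 3 else 2 := by
  have h := hL.2.2.2 w hw hlt
  split at h <;> split <;> first | exact ncard_of_encard (by exact_mod_cast h) | simp_all

lemma level_succ_card {m : ℕ} {L : Set W} (hL : L ∈ WP m) {k : ℕ} (hk : k + 1 ≤ m) :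
    {w ∈ L | w.length = k + 1}.ncard
      = (if k = 0 then 3 else 2) * {w ∈ L | w.length = k}.ncard := by
  classical
  have hLf := WP_elt_finite hL
  have h1 : {w ∈ L | w.length = k + 1}.Finite := hLf.subset (Set.sep_subset _ _)
  have h0 : {w ∈ L | w.length = k}.Finite := hLf.subset (Set.sep_subset _ _)
  rw [Set.ncard_eq_toFinset_card _ h1, Set.ncard_eq_toFinset_card _ h0]
  have H : ∀ v ∈ h1.toFinset, v.dropLast ∈ h0.toFinset := by
    intro v hv
    rw [Set.Finite.mem_toFinset] at hv ⊢
    refine ⟨hL.2.2.1 v hv.1 _ (List.dropLast_prefix v), ?_⟩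
    rw [List.length_dropLast, hv.2]
    omega
  rw [Finset.card_eq_sum_card_fiberwise H]
  have hfib : ∀ w ∈ h0.toFinset,
      (h1.toFinset.filter fun v => v.dropLast = w).card = if k = 0 then 3 else 2 := by
    intro w hw
    rw [Set.Finite.mem_toFinset] at hw
    obtain ⟨hwL, hwlen⟩ := hw
    have himg : h1.toFinset.filter (fun v => v.dropLast = w)
        = ((Set.toFinite (chl L w)).toFinset).image (fun x => w ++ [x]) := by
      ext v
      rw [Finset.mem_filter, Set.Finite.mem_toFinset, Finset.mem_image]
      constructor
      · rintro ⟨⟨hvL, hvlen⟩, hdrop⟩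
        have hvne : v ≠ [] := by
          intro hv; rw [hv] at hvlen; simp at hvlen
        refine ⟨v.getLast hvne, ?_, ?_⟩
        · rw [Set.Finite.mem_toFinset]
          show w ++ [v.getLast hvne] ∈ L
          rw [← hdrop, List.dropLast_append_getLast hvne]
          exact hvL
        · rw [← hdrop, List.dropLast_append_getLast hvne]
      · rintro ⟨x, hx, rfl⟩
        rw [Set.Finite.mem_toFinset] at hx
        refine ⟨⟨hx, by simp [hwlen]⟩, List.dropLast_concat⟩
    rw [himg, Finset.card_image_of_injective _ (fun a b hab => by simpa using hab),
      ← Set.ncard_eq_toFinset_card _ (Set.toFinite (chl L w)),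
      chl_ncard hL hwL (by omega)]
    congr 1
    simp [← List.length_eq_zero_iff, hwlen]
  rw [Finset.sum_congr rfl hfib, Finset.sum_const, smul_eq_mul, mul_comm]

lemma level_card {m : ℕ} {L : Set W} (hL : L ∈ WP m) {k : ℕ} (h1 : 1 ≤ k) (hk : k ≤ m) :
    {w ∈ L | w.length = k}.ncard = 3 * 2 ^ (k - 1) := by
  induction k, h1 using Nat.le_induction with
  | base =>
    rw [level_succ_card hL hk, if_pos rfl, level_zero hL, Set.ncard_singleton]
    norm_num
  | succ k hk1 ih =>
    rw [level_succ_card hL hk, if_neg (by omega), ih (by omega)]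
    have h2 : 2 ^ k = 2 ^ (k - 1) * 2 := by
      rw [← pow_succ, Nat.sub_add_cancel hk1]
    rw [Nat.add_sub_cancel, h2]
    ring

/-! ### The base case: patterns of radius 1 -/

lemma encard_univ_A : (Set.univ : Set A).encard = 4 := by
  rw [Set.encard_univ, ENat.card_eq_coe_fintype_card]
  decide

lemma encard_compl_singleton (a : A) : ({a}ᶜ : Set A).encard = 3 := by
  have h := Set.encard_add_encard_compl ({a} : Set A)
  rw [Set.encard_singleton, encard_univ_A] at h
  have h4 : (4 : ℕ∞) = 3 + 1 := by decide
  rw [h4, add_comm (1 : ℕ∞)] at h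
  exact WithTop.add_right_cancel (by exact WithTop.one_ne_top) h

lemma encard_three_iff (R : Set A) : R.encard = 3 ↔ ∃ a : A, R = {a}ᶜ := by
  constructor
  · intro h
    have h2 := Set.encard_add_encard_compl R
    rw [h, encard_univ_A] at h2
    have h4 : (4 : ℕ∞) = 3 + 1 := by decide
    rw [h4] at h2
    have h5 : Rᶜ.encard = 1 := WithTop.add_left_cancel (by decide) h2
    obtain ⟨a, ha⟩ := Set.encard_eq_one.mp h5
    exact ⟨a, by rw [← compl_compl R, ha]⟩
  · rintro ⟨a, rfl⟩
    exact encard_compl_singleton a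

lemma ncard_three_subsets : {R : Set A | R.encard = 3}.ncard = 4 := by
  have heq : {R : Set A | R.encard = 3} = (fun a : A => ({a}ᶜ : Set A)) '' Set.univ := by
    ext R
    simp only [Set.mem_setOf_eq, Set.image_univ, Set.mem_range]
    rw [encard_three_iff]
    exact ⟨fun ⟨a, h⟩ => ⟨a, h.symm⟩, fun ⟨a, h⟩ => ⟨a, h.symm⟩⟩
  rw [heq, Set.ncard_image_of_injective _
    (fun a b hab => Set.singleton_injective (compl_injective hab)), Set.ncard_univ,
    Nat.card_eq_fintype_card]
  decide

lemma WP_one_eq : WP 1 = (fun R : Set A => insert ([] : W) ((fun x => [x]) '' R)) ''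
    {R : Set A | R.encard = 3} := by
  ext L
  constructor
  · intro hL
    refine ⟨chl L [], ?_, ?_⟩
    · have h := hL.2.2.2 [] hL.1 (by norm_num)
      rw [if_pos rfl] at h
      exact h
    · symm
      ext w
      simp only [Set.mem_insert_iff, Set.mem_image, chl, Set.mem_setOf_eq, List.nil_append]
      constructor
      · intro hw
        rcases w with _ | ⟨x, _ | ⟨y, t⟩⟩
        · exact Or.inl rfl
        · exact Or.inr ⟨x, hw, rfl⟩
        · exact absurd (hL.2.1 _ hw).2 (by simp)
      · rintro (rfl | ⟨x, hx, rfl⟩)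
        · exact hL.1
        · exact hx
  · rintro ⟨R, hR, rfl⟩
    refine ⟨Set.mem_insert _ _, ?_, ?_, ?_⟩
    · rintro w (rfl | ⟨x, _, rfl⟩)
      · exact ⟨rd_nil, by simp⟩
      · exact ⟨rd_singleton x, by simp⟩
    · rintro w (rfl | ⟨x, hx, rfl⟩) u hu
      · rw [List.prefix_nil.mp hu]
        exact Set.mem_insert _ _
      · rcases u with _ | ⟨a, u'⟩
        · exact Set.mem_insert _ _
        · have := hu.eq_of_length (le_antisymm hu.length_le (by simp))
          rw [this]
          exact Set.mem_insert_of_mem _ ⟨x, hx, rfl⟩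
    · rintro w (rfl | ⟨x, _, rfl⟩) hlen
      · rw [if_pos rfl]
        have : chl (insert ([] : W) ((fun x => [x]) '' R)) [] = R := by
          ext x
          simp [chl]
        rw [this]
        exact hR
      · simp at hlen

lemma WP_one_ncard : (WP 1).ncard = 4 := by
  rw [WP_one_eq, Set.ncard_image_of_injective _ ?_, ncard_three_subsets]
  intro R R' h
  beta_reduce at h
  ext x
  have hx : ∀ Q : Set A, [x] ∈ insert ([] : W) ((fun x => [x]) '' Q) ↔ x ∈ Q := by
    intro Q
    simp [Set.mem_insert_iff]
  rw [← hx R, ← hx R', h]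

/-! ### Truncation fibers -/

def trunc (m : ℕ) (L : Set W) : Set W := {w ∈ L | w.length ≤ m}

def lst (w : W) : A := w.getLastD (0, true)

lemma lst_concat (u : W) (y : A) : lst (u ++ [y]) = y := by
  simp [lst, List.getLastD_concat]

def cand (w : W) : Set A := {x | x ≠ bar (lst w)}

open scoped Classical in
noncomputable def excl (L : Set W) (w : W) : A :=
  if h : (cand w \ chl L w).Nonempty then h.choose else (0, true)

lemma excl_of_eq {L : Set W} {w : W} {a : A} (h : cand w \ chl L w = {a}) :
    excl L w = a := by
  have hne : (cand w \ chl L w).Nonempty := ⟨a, by rw [h]; rfl⟩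
  rw [excl]
  rw [dif_pos hne]
  exact (Set.ext_iff.mp h _).mp hne.choose_spec

def leavesSet (m : ℕ) (P : Set W) : Set W := {w ∈ P | w.length = m}

lemma leaves_finite (m : ℕ) (P : Set W) : (leavesSet m P).Finite :=
  (List.finite_length_le A m).subset (fun w hw => hw.2.le)

noncomputable def leafF (m : ℕ) (P : Set W) : Finset W := (leaves_finite m P).toFinset

lemma mem_leafF {m : ℕ} {P : Set W} {w : W} : w ∈ leafF m P ↔ w ∈ P ∧ w.length = m :=
  Set.Finite.mem_toFinset _

noncomputable def candF (w : W) : Finset A := Finset.univ.erase (bar (lst w))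

lemma mem_candF {w : W} {x : A} : x ∈ candF w ↔ x ∈ cand w := by
  simp [candF, cand]

lemma candF_card (w : W) : (candF w).card = 3 := by
  rw [candF, Finset.card_erase_of_mem (Finset.mem_univ _), Finset.card_univ]
  decide

lemma cand_encard (w : W) : (cand w).encard = 3 := by
  have h : cand w = {bar (lst w)}ᶜ := by
    ext x; simp [cand]
  rw [h, encard_compl_singleton]

lemma rd_concat_ne {w' : W} {y x : A} (h : Rd ((w' ++ [y]) ++ [x])) : x ≠ bar y := by
  rw [Rd, List.Chain', List.isChain_append] at h
  have h2 := h.2.2 y (by simp [List.getLast?_concat]) x (by simp)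
  rw [relR_iff] at h2
  intro hx
  rw [hx, bar_bar] at h2
  exact h2 rfl

lemma rd_extend {w' : W} {y x : A} (hrd : Rd (w' ++ [y])) (hxb : x ≠ bar y) :
    Rd ((w' ++ [y]) ++ [x]) := by
  rw [Rd, List.Chain', List.isChain_append]
  refine ⟨hrd, List.isChain_singleton x, ?_⟩
  intro a ha b hb
  rw [List.getLast?_concat] at ha
  simp at ha hb
  subst ha; subst hb
  rw [relR_iff]
  intro h
  exact hxb (by rw [h, bar_bar])

lemma chl_subset_cand {m : ℕ} {L : Set W} (hL : L ∈ WP m) {w : W} (hne : w ≠ []) :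
    chl L w ⊆ cand w := by
  intro x hx
  rcases List.eq_nil_or_concat w with rfl | ⟨w', y, hw⟩
  · exact absurd rfl hne
  · rw [List.concat_eq_append] at hw
    subst hw
    have hrd := (hL.2.1 _ hx).1
    rw [cand, Set.mem_setOf_eq, lst_concat]
    exact rd_concat_ne hrd

lemma leaf_ne_nil {m : ℕ} {w : W} (hm : 1 ≤ m) (hlen : w.length = m) : w ≠ [] := by
  intro h; rw [h] at hlen; simp at hlen; omega

lemma leaf_chl_encard {m : ℕ} {L : Set W} (hm : 1 ≤ m) (hL : L ∈ WP (m + 1)) {w : W}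
    (hw : w ∈ L) (hlen : w.length = m) : (chl L w).encard = 2 := by
  have h := hL.2.2.2 w hw (by omega)
  rwa [if_neg (leaf_ne_nil hm hlen)] at h

lemma excl_eq {m : ℕ} {L : Set W} (hm : 1 ≤ m) (hL : L ∈ WP (m + 1)) {w : W}
    (hw : w ∈ L) (hlen : w.length = m) : cand w \ chl L w = {excl L w} := by
  have hsub := chl_subset_cand hL (leaf_ne_nil hm hlen)
  have h1 := Set.encard_diff_add_encard_of_subset hsub
  rw [cand_encard, leaf_chl_encard hm hL hw hlen] at h1
  have h3 : (3 : ℕ∞) = 1 + 2 := by decide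
  rw [h3] at h1
  have h2 : (cand w \ chl L w).encard = 1 := WithTop.add_right_cancel (by decide) h1
  obtain ⟨a, ha⟩ := Set.encard_eq_one.mp h2
  rw [ha, excl_of_eq ha]

lemma chl_eq_cand_diff {m : ℕ} {L : Set W} (hm : 1 ≤ m) (hL : L ∈ WP (m + 1)) {w : W}
    (hw : w ∈ L) (hlen : w.length = m) : chl L w = cand w \ {excl L w} := by
  have hex := excl_eq hm hL hw hlen
  have hmem : excl L w ∈ cand w \ chl L w := by rw [hex]; rfl
  have hsub : chl L w ⊆ cand w \ {excl L w} := by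
    intro x hx
    refine ⟨chl_subset_cand hL (leaf_ne_nil hm hlen) hx, ?_⟩
    intro hxe
    rw [Set.mem_singleton_iff] at hxe
    exact hmem.2 (hxe ▸ hx)
  refine Set.Finite.eq_of_subset_of_encard_le (Set.toFinite _) hsub ?_
  rw [Set.encard_diff_singleton_of_mem hmem.1, cand_encard,
    leaf_chl_encard hm hL hw hlen]
  decide

lemma trunc_mem_WP {m : ℕ} {L : Set W} (hL : L ∈ WP (m + 1)) : trunc m L ∈ WP m := by
  refine ⟨⟨hL.1, by simp⟩, ?_, ?_, ?_⟩
  · rintro w ⟨hw, hlen⟩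
    exact ⟨(hL.2.1 w hw).1, hlen⟩
  · rintro w ⟨hw, hlen⟩ u hu
    exact ⟨hL.2.2.1 w hw u hu, le_trans hu.length_le hlen⟩
  · rintro w ⟨hw, hlen⟩ hlt
    have hchl : chl (trunc m L) w = chl L w := by
      ext x
      simp only [chl, trunc, Set.mem_setOf_eq]
      exact ⟨fun h => h.1, fun h => ⟨h, by simp; omega⟩⟩
    rw [hchl]
    exact hL.2.2.2 w hw (by omega)

lemma decode {m : ℕ} {L : Set W} (hm : 1 ≤ m) (hL : L ∈ WP (m + 1)) :
    L = trunc m L ∪ ⋃ w ∈ leavesSet m (trunc m L), (fun x => w ++ [x]) '' chl L w := by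
  ext v
  simp only [Set.mem_union, Set.mem_iUnion, Set.mem_image, exists_prop]
  constructor
  · intro hv
    have hlen := (hL.2.1 v hv).2
    rcases Nat.lt_or_ge v.length (m + 1) with hlt | hge
    · exact Or.inl ⟨hv, by omega⟩
    · right
      have hne : v ≠ [] := by intro h; rw [h] at hge; simp at hge
      have hdm : v.dropLast ∈ L := hL.2.2.1 v hv _ (List.dropLast_prefix v)
      have hdl : v.dropLast.length = m := by
        rw [List.length_dropLast]; omega
      refine ⟨v.dropLast, ⟨⟨hdm, by omega⟩, hdl⟩, v.getLast hne, ?_, ?_⟩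
      · show v.dropLast ++ [v.getLast hne] ∈ L
        rwa [List.dropLast_append_getLast hne]
      · exact List.dropLast_append_getLast hne
  · rintro (hv | ⟨w, _, x, hx, rfl⟩)
    · exact hv.1
    · exact hx

noncomputable def phi (m : ℕ) (P : Set W) (L : Set W) : ↥(leafF m P) → A :=
  fun w => excl L ↑w

def fiber (m : ℕ) (P : Set W) : Set (Set W) := {L | L ∈ WP (m + 1) ∧ trunc m L = P}

lemma phi_mapsTo {m : ℕ} {P : Set W} (hm : 1 ≤ m) :
    Set.MapsTo (phi m P) (fiber m P)
      ↑(Fintype.piFinset fun w : ↥(leafF m P) => candF (↑w : W)) := by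
  rintro L ⟨hL, htr⟩
  rw [Finset.mem_coe, Fintype.mem_piFinset]
  intro w
  have hw := mem_leafF.mp w.2
  have hwL : (↑w : W) ∈ L := by
    have h3 : (↑w : W) ∈ trunc m L := by rw [htr]; exact hw.1
    exact h3.1
  have hlen : (↑w : W).length = m := hw.2
  rw [mem_candF]
  have hex := excl_eq hm hL hwL hlen
  have hmem : excl L ↑w ∈ cand ↑w \ chl L ↑w := by rw [hex]; rfl
  exact hmem.1

lemma phi_injOn {m : ℕ} {P : Set W} (hm : 1 ≤ m) :
    Set.InjOn (phi m P) (fiber m P) := by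
  rintro L ⟨hL, htr⟩ L' ⟨hL', htr'⟩ hphi
  have hch : ∀ w ∈ leavesSet m P, chl L w = chl L' w := by
    intro w hw
    have hwl : w ∈ leafF m P := mem_leafF.mpr hw
    have hw1 := hw
    have hw2 := hw
    rw [show P = trunc m L from htr.symm] at hw1
    rw [show P = trunc m L' from htr'.symm] at hw2
    have hwL : w ∈ L := hw1.1.1
    have hwL' : w ∈ L' := hw2.1.1
    have he : excl L w = excl L' w := congrFun hphi ⟨w, hwl⟩
    rw [chl_eq_cand_diff hm hL hwL hw.2, chl_eq_cand_diff hm hL' hwL' hw.2, he]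
  rw [decode hm hL, decode hm hL', htr, htr']
  congr 1
  exact Set.iUnion₂_congr (fun w hw => by rw [hch w hw])

lemma phi_surjOn {m : ℕ} {P : Set W} (hm : 1 ≤ m) (hP : P ∈ WP m) :
    Set.SurjOn (phi m P) (fiber m P)
      ↑(Fintype.piFinset fun w : ↥(leafF m P) => candF (↑w : W)) := by
  intro f hf
  rw [Finset.mem_coe, Fintype.mem_piFinset] at hf
  set Lf : Set W := P ∪ ⋃ w : ↥(leafF m P), (fun x => (↑w : W) ++ [x]) '' (cand ↑w \ {f w})
    with hLfdef
  have hmemf : ∀ v, v ∈ Lf ↔ v ∈ P ∨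
      ∃ w : ↥(leafF m P), ∃ x ∈ cand ↑w \ {f w}, (↑w : W) ++ [x] = v := by
    intro v
    simp only [hLfdef, Set.mem_union, Set.mem_iUnion, Set.mem_image]
  have hPlen : ∀ v ∈ P, v.length ≤ m := fun v hv => (hP.2.1 v hv).2
  have hnew_len : ∀ (w : ↥(leafF m P)) (x : A), ((↑w : W) ++ [x]).length = m + 1 := by
    intro w x
    have := (mem_leafF.mp w.2).2
    simp [this]
  have hchlf : ∀ w : ↥(leafF m P), chl Lf ↑w = cand ↑w \ {f w} := by
    intro w
    obtain ⟨hwP, hwlen⟩ := mem_leafF.mp w.2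
    ext x
    rw [chl, Set.mem_setOf_eq, hmemf]
    constructor
    · rintro (hin | ⟨w', x', hx', heq⟩)
      · exfalso
        have := hPlen _ hin
        simp [hwlen] at this
      · have hl : (↑w' : W).length = (↑w : W).length := by
          rw [(mem_leafF.mp w'.2).2, hwlen]
        obtain ⟨h1, h2⟩ := List.append_inj heq hl
        have hx : x' = x := by simpa using h2
        have hww : w' = w := Subtype.ext h1
        rw [hww, hx] at hx'
        exact hx'
    · intro hx
      exact Or.inr ⟨w, x, hx, rfl⟩
  have hLfWP : Lf ∈ WP (m + 1) := by
    refine ⟨(hmemf []).mpr (Or.inl hP.1), ?_, ?_, ?_⟩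
    · intro v hv
      rcases (hmemf v).mp hv with hvP | ⟨w, x, hx, rfl⟩
      · exact ⟨(hP.2.1 v hvP).1, le_trans (hPlen v hvP) (by omega)⟩
      · obtain ⟨hwP, hwlen⟩ := mem_leafF.mp w.2
        refine ⟨?_, by rw [hnew_len]⟩
        rcases List.eq_nil_or_concat (↑w : W) with hnil | ⟨w', y, hww⟩
        · exact absurd hnil (leaf_ne_nil hm hwlen)
        · rw [List.concat_eq_append] at hww
          rw [hww]
          refine rd_extend (by rw [← hww]; exact (hP.2.1 _ hwP).1) ?_
          have hc := hx.1
          rw [cand, Set.mem_setOf_eq] at hc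
          rwa [hww, lst_concat] at hc
    · intro v hv u hu
      rcases (hmemf v).mp hv with hvP | ⟨w, x, hx, rfl⟩
      · exact (hmemf u).mpr (Or.inl (hP.2.2.1 v hvP u hu))
      · rcases Nat.lt_or_ge u.length ((↑w : W) ++ [x]).length with hlt | hge
        · have hu' : u <+: (↑w : W) := by
            refine List.prefix_of_prefix_length_le hu (List.prefix_append _ _) ?_
            rw [hnew_len w x] at hlt
            have := (mem_leafF.mp w.2).2
            omega
          exact (hmemf u).mpr (Or.inl (hP.2.2.1 _ (mem_leafF.mp w.2).1 u hu'))
        · have heq := hu.eq_of_length (le_antisymm hu.length_le hge)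
          rw [heq]
          exact hv
    · intro v hv hvlt
      have hvP : v ∈ P := by
        rcases (hmemf v).mp hv with h | ⟨w, x, hx, heq⟩
        · exact h
        · exfalso
          rw [← heq, hnew_len] at hvlt
          omega
      rcases Nat.lt_or_ge v.length m with hvm | hvm
      · have hchl : chl Lf v = chl P v := by
          ext x
          rw [chl, chl, Set.mem_setOf_eq, Set.mem_setOf_eq, hmemf]
          constructor
          · rintro (h | ⟨w, x', hx', heq⟩)
            · exact h
            · exfalso
              have h1 := hnew_len w x'
              have h2 := congrArg List.length heq
              rw [h1] at h2
              simp at h2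
              omega
          · exact Or.inl
        rw [hchl]
        exact hP.2.2.2 v hvP hvm
      · have hvlen : v.length = m := by omega
        have hvleaf : v ∈ leafF m P := mem_leafF.mpr ⟨hvP, hvlen⟩
        rw [show chl Lf v = cand v \ {f ⟨v, hvleaf⟩} from hchlf ⟨v, hvleaf⟩,
          if_neg (leaf_ne_nil hm hvlen)]
        have hfc : f ⟨v, hvleaf⟩ ∈ cand v := mem_candF.mp (hf ⟨v, hvleaf⟩)
        rw [Set.encard_diff_singleton_of_mem hfc, cand_encard]
        decide
  have htr : trunc m Lf = P := by
    ext v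
    constructor
    · rintro ⟨hv, hlen⟩
      rcases (hmemf v).mp hv with h | ⟨w, x, hx, heq⟩
      · exact h
      · exfalso
        rw [← heq, hnew_len] at hlen
        omega
    · intro hv
      exact ⟨(hmemf v).mpr (Or.inl hv), hPlen v hv⟩
  refine ⟨Lf, ⟨hLfWP, htr⟩, ?_⟩
  funext w
  show excl Lf ↑w = f w
  have hfw : f w ∈ cand ↑w := mem_candF.mp (hf w)
  have hd : cand ↑w \ chl Lf ↑w = {f w} := by
    rw [hchlf w, Set.diff_diff_cancel_left (Set.singleton_subset_iff.mpr hfw)]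
  exact excl_of_eq hd

lemma fiber_ncard {m : ℕ} {P : Set W} (hm : 1 ≤ m) (hP : P ∈ WP m) :
    (fiber m P).ncard = 3 ^ (3 * 2 ^ (m - 1)) := by
  have hbij : Set.BijOn (phi m P) (fiber m P)
      ↑(Fintype.piFinset fun w : ↥(leafF m P) => candF (↑w : W)) :=
    ⟨phi_mapsTo hm, phi_injOn hm, phi_surjOn hm hP⟩
  rw [← Set.ncard_image_of_injOn hbij.injOn, hbij.image_eq, Set.ncard_coe_finset,
    Fintype.card_piFinset]
  simp only [candF_card]
  rw [Finset.prod_const, Finset.card_univ, Fintype.card_coe]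
  congr 1
  rw [leafF, ← Set.ncard_eq_toFinset_card _ (leaves_finite m P)]
  exact level_card hP hm le_rfl

lemma WP_succ_ncard {m : ℕ} (hm : 1 ≤ m) :
    (WP (m + 1)).ncard = (WP m).ncard * 3 ^ (3 * 2 ^ (m - 1)) := by
  classical
  have hfin1 := WP_finite (m + 1)
  have hfin0 := WP_finite m
  rw [Set.ncard_eq_toFinset_card _ hfin1, Set.ncard_eq_toFinset_card _ hfin0]
  have Hmaps : ∀ L ∈ hfin1.toFinset, trunc m L ∈ hfin0.toFinset := by
    intro L hL
    rw [Set.Finite.mem_toFinset] at *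
    exact trunc_mem_WP hL
  rw [Finset.card_eq_sum_card_fiberwise Hmaps]
  have hfib : ∀ P ∈ hfin0.toFinset,
      (hfin1.toFinset.filter fun L => trunc m L = P).card = 3 ^ (3 * 2 ^ (m - 1)) := by
    intro P hP
    rw [Set.Finite.mem_toFinset] at hP
    have hset : ↑(hfin1.toFinset.filter fun L => trunc m L = P) = fiber m P := by
      ext L
      simp [Set.Finite.mem_toFinset, fiber]
    rw [← Set.ncard_coe_finset, hset]
    exact fiber_ncard hm hP
  rw [Finset.sum_congr rfl hfib, Finset.sum_const, smul_eq_mul]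

theorem WP_ncard (m : ℕ) (hm : 1 ≤ m) : (WP m).ncard = 4 * 3 ^ (3 * (2 ^ (m - 1) - 1)) := by
  induction m, hm using Nat.le_induction with
  | base =>
    rw [WP_one_ncard]
    norm_num
  | succ m hm ih =>
    rw [WP_succ_ncard hm, ih, mul_assoc, ← pow_add]
    congr 2
    have h1 : 1 ≤ 2 ^ (m - 1) := Nat.one_le_two_pow
    have h2 : 2 ^ m = 2 * 2 ^ (m - 1) := by
      conv_lhs => rw [show m = (m - 1) + 1 by omega]
      rw [pow_succ]
      ring
    simp only [Nat.add_sub_cancel]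
    omega

/-- Exactly `4 * 3^(3 * (2^(m-1) - 1))` patterns of radius `m ≥ 1` occur among
trivalent trees, i.e. that many closed balls of radius `e^{-m}` are needed to cover `Z`. -/
theorem Lam_trivalent (m : ℕ) (hm : 1 ≤ m) :
    Lam Ztri m = 4 * 3 ^ (3 * (2 ^ (m - 1) - 1)) := by
  have hinj : Function.Injective (Set.image (FreeGroup.toWord) : Set F → Set W) :=
    Set.image_injective.mpr FreeGroup.toWord_injective
  unfold Lam
  rw [← Set.ncard_image_of_injective _ hinj, image_balls_eq m hm, WP_ncard m hm]

end GraphTrees
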